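/- Fix u,v ∈ {1,...,m} and define T^{u,v} ∈ ℂ^{I(n,m)} by c_i(T^{u,v}) = 1 if i_u ≤ i_v, else 0. Then for every 1-unconditional norm ‖·‖ on ℂⁿ and every m-form L, sup_{‖x⁽ᵏ⁾‖≤1} |(T^{u,v} ⊙ L)(x⁽¹⁾,...,x⁽ᵐ⁾)| ≤ log₂(2n) · sup_{‖x⁽ᵏ⁾‖≤1} |L(x⁽¹⁾,...,x⁽ᵐ⁾)|. -/

import Mathlib

/-- Number of layers needed for triangular decomposition on `[0,n)`. -/
def Dn : ℕ → ℕ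
  | 0 => 0
  | (n+1) => Dn ((n+1)/2) + 1
decreasing_by exact Nat.div_lt_self (Nat.succ_pos n) (by norm_num)

lemma Dn_rec (n : ℕ) (h : n ≠ 0) : Dn n = Dn (n / 2) + 1 := by
  obtain ⟨k, rfl⟩ := Nat.exists_eq_succ_of_ne_zero h
  rw [Dn]

lemma Dn_mono : ∀ {a b : ℕ}, a ≤ b → Dn a ≤ Dn b := by
  intro a
  induction a using Nat.strong_induction_on with
  | _ a IH =>
  intro b hab
  rcases Nat.eq_zero_or_pos a with h0 | ha
  · subst h0; simp [Dn]
  · have hb : b ≠ 0 := by omega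
    rw [Dn_rec a (by omega), Dn_rec b hb]
    have := IH (a / 2) (Nat.div_lt_self ha (by norm_num)) (Nat.div_le_div_right hab)
    omega

theorem layer_exists (n : ℕ) : ∃ φ ψ : ℕ → ℕ → ℕ, ∀ p q, p < n → q < n → ∀ M, Dn n ≤ M →
    (∑ t ∈ Finset.range M, if φ p t = ψ q t then 1 else 0) = (if p ≤ q then 1 else 0) := by
  induction n using Nat.strong_induction_on with
  | _ n IH =>
  rcases Nat.eq_zero_or_pos n with h0 | hn
  · exact ⟨fun _ _ => 0, fun _ _ => 1, by omega⟩
  set a := (n+1)/2 with ha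
  obtain ⟨φL, ψL, hL⟩ := IH (a-1) (by omega)
  obtain ⟨φR, ψR, hR⟩ := IH (n-a) (by omega)
  refine ⟨fun p t => if t = 0 then (if p < a then 0 else 1)
      else if p < a - 1 then 4 * φL p (t-1)
      else if a ≤ p then 4 * φR (p - a) (t-1) + 1 else 2,
    fun q t => if t = 0 then (if a - 1 ≤ q then 0 else 2)
      else if q < a - 1 then 4 * ψL q (t-1)
      else if a ≤ q then 4 * ψR (q - a) (t-1) + 1 else 3, ?_⟩
  intro p q hp hq M hM
  have hDn : Dn n = Dn (n/2) + 1 := Dn_rec n (by omega)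
  obtain ⟨M', rfl⟩ : ∃ M', M = M' + 1 := ⟨M - 1, by omega⟩
  have hM'L : Dn (a - 1) ≤ M' := le_trans (Dn_mono (by omega : a - 1 ≤ n/2)) (by omega)
  have hM'R : Dn (n - a) ≤ M' := le_trans (Dn_mono (by omega : n - a ≤ n/2)) (by omega)
  rw [Finset.sum_range_succ']
  have h0 : (if (if (0:ℕ) = 0 then (if p < a then 0 else 1)
      else if p < a - 1 then 4 * φL p (0-1)
      else if a ≤ p then 4 * φR (p - a) (0-1) + 1 else 2) =
      (if (0:ℕ) = 0 then (if a - 1 ≤ q then 0 else 2)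
      else if q < a - 1 then 4 * ψL q (0-1)
      else if a ≤ q then 4 * ψR (q - a) (0-1) + 1 else 3) then 1 else 0)
      = if p < a ∧ a - 1 ≤ q then 1 else 0 := by
    rw [if_pos rfl, if_pos rfl]
    by_cases h1 : p < a <;> by_cases h2 : a - 1 ≤ q <;> simp [h1, h2]
  rw [h0]
  have hsum : ∀ t, (if (if t + 1 = 0 then (if p < a then 0 else 1)
      else if p < a - 1 then 4 * φL p (t+1-1)
      else if a ≤ p then 4 * φR (p - a) (t+1-1) + 1 else 2) =
      (if t + 1 = 0 then (if a - 1 ≤ q then 0 else 2)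
      else if q < a - 1 then 4 * ψL q (t+1-1)
      else if a ≤ q then 4 * ψR (q - a) (t+1-1) + 1 else 3) then 1 else 0)
      = (if p < a - 1 ∧ q < a - 1 then (if φL p t = ψL q t then 1 else 0)
        else if a ≤ p ∧ a ≤ q then (if φR (p-a) t = ψR (q-a) t then 1 else 0) else 0) := by
    intro t
    rw [if_neg (Nat.succ_ne_zero t), if_neg (Nat.succ_ne_zero t), Nat.add_sub_cancel]
    split_ifs <;> omega
  rw [Finset.sum_congr rfl (fun t _ => hsum t)]
  rcases lt_trichotomy p (a-1) with hpL | hpE | hpR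
  · rcases lt_trichotomy q (a-1) with hqL | hqE | hqR
    · rw [Finset.sum_congr rfl (fun t _ => by rw [if_pos ⟨hpL, hqL⟩]),
        hL p q hpL hqL M' hM'L]
      split_ifs <;> omega
    · rw [Finset.sum_eq_zero (fun t _ => by
        rw [if_neg (by omega), if_neg (by omega)])]
      split_ifs <;> omega
    · rw [Finset.sum_eq_zero (fun t _ => by
        rw [if_neg (by omega), if_neg (by omega)])]
      split_ifs <;> omega
  · rw [Finset.sum_eq_zero (fun t _ => by
      rw [if_neg (by omega), if_neg (by omega)])]
    split_ifs <;> omega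
  · rcases lt_or_ge q a with hqL | hqR
    · rw [Finset.sum_eq_zero (fun t _ => by
        rw [if_neg (by omega), if_neg (by omega)])]
      split_ifs <;> omega
    · rw [Finset.sum_congr rfl (fun t _ => by
        rw [if_neg (by omega), if_pos ⟨by omega, hqR⟩]),
        hR (p-a) (q-a) (by omega) (by omega) M' hM'R]
      split_ifs <;> omega

lemma prod_two {m : ℕ} (u v : Fin m) (huv : u ≠ v) (A B : Fin m → ℂ) :
    (∏ k : Fin m, (if k = u then A k else if k = v then B k else 1)) = A u * B v := by
  rw [← Finset.prod_subset (Finset.subset_univ {u, v})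
    (fun k _ hk => by
      simp only [Finset.mem_insert, Finset.mem_singleton, not_or] at hk
      simp [hk.1, hk.2])]
  rw [Finset.prod_pair huv]
  simp [huv, Ne.symm huv]

lemma expand {n m : ℕ} (L : MultilinearMap ℂ (fun _ : Fin m => (Fin n → ℂ)) ℂ)
    (y : Fin m → Fin n → ℂ) :
    L y = ∑ i : Fin m → Fin n, (∏ k, y k (i k)) * L (fun k => Pi.single (i k) 1) := by
  have hy : y = fun k => ∑ j : Fin n, y k j • (Pi.single j 1 : Fin n → ℂ) := by
    funext k j
    simp [Pi.single_apply, Finset.sum_ite_eq']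
  conv_lhs => rw [hy]
  rw [L.map_sum]
  refine Finset.sum_congr rfl (fun i _ => ?_)
  rw [L.map_smul_univ]
  simp [smul_eq_mul]

section NormFacts

variable {n : ℕ} (N : (Fin n → ℂ) → ℝ)
  (hN_tri : ∀ x y : Fin n → ℂ, N (x + y) ≤ N x + N y)
  (hN_smul : ∀ (a : ℂ) (x : Fin n → ℂ), N (a • x) = ‖a‖ * N x)
  (hN_def : ∀ x : Fin n → ℂ, N x = 0 → x = 0)
  (hN_unc : ∀ x y : Fin n → ℂ, (∀ j, ‖x j‖ ≤ ‖y j‖) → N x ≤ N y)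

include hN_smul in
lemma N_zero : N 0 = 0 := by
  have := hN_smul 0 0
  simpa using this

include hN_tri hN_smul in
lemma N_nonneg (x : Fin n → ℂ) : 0 ≤ N x := by
  have h1 : N (x + (-x)) ≤ N x + N (-x) := hN_tri x (-x)
  have h2 : N (-x) = N x := by
    have := hN_smul (-1) x
    simpa using this
  have h3 : N 0 = 0 := N_zero N hN_smul
  rw [add_neg_cancel, h3, h2] at h1
  linarith

include hN_tri hN_smul hN_def hN_unc in
lemma coord_bound (y : Fin n → ℂ) (hy : N y ≤ 1) (j : Fin n) :
    ‖y j‖ ≤ (N (Pi.single j 1))⁻¹ := by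
  have hpos : 0 < N (Pi.single j 1) := by
    rcases lt_or_eq_of_le (N_nonneg N hN_tri hN_smul (Pi.single j 1)) with h | h
    · exact h
    · exfalso
      have := hN_def _ h.symm
      have := congrFun this j
      simp at this
  have hle : N (y j • (Pi.single j 1 : Fin n → ℂ)) ≤ N y := by
    refine hN_unc _ _ (fun l => ?_)
    rcases eq_or_ne l j with rfl | hl
    · simp
    · simp [Pi.single_apply, hl]
  rw [hN_smul] at hle
  rw [← le_div_iff₀ hpos] at hle
  calc ‖y j‖ ≤ N y / N (Pi.single j 1) := hle
    _ ≤ 1 / N (Pi.single j 1) := by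
        gcongr
    _ = (N (Pi.single j 1))⁻¹ := one_div _

include hN_tri hN_smul hN_def hN_unc in
lemma le_sup {m : ℕ} (L : MultilinearMap ℂ (fun _ : Fin m => (Fin n → ℂ)) ℂ)
    (y : Fin m → Fin n → ℂ) (hy : ∀ k, N (y k) ≤ 1) :
    ‖L y‖ ≤ ⨆ z : {z : Fin m → (Fin n → ℂ) // ∀ k, N (z k) ≤ 1}, ‖L z.1‖ := by
  have hB : BddAbove (Set.range fun z : {z : Fin m → (Fin n → ℂ) // ∀ k, N (z k) ≤ 1} => ‖L z.1‖) := by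
    refine ⟨∑ i : Fin m → Fin n, (∏ k, (N (Pi.single (i k) 1))⁻¹) * ‖L (fun k => Pi.single (i k) 1)‖, ?_⟩
    rintro s ⟨z, rfl⟩
    simp only
    rw [expand L z.1]
    refine le_trans (norm_sum_le _ _) (Finset.sum_le_sum (fun i _ => ?_))
    rw [norm_mul, norm_prod]
    refine mul_le_mul_of_nonneg_right (Finset.prod_le_prod (fun k _ => norm_nonneg _)
      (fun k _ => coord_bound N hN_tri hN_smul hN_def hN_unc _ (z.2 k) _)) (norm_nonneg _)
  exact le_ciSup hB (⟨y, hy⟩ : {z : Fin m → (Fin n → ℂ) // ∀ k, N (z k) ≤ 1})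

end NormFacts

lemma layer_bound {n m : ℕ} (u v : Fin m) (huv : u ≠ v)
    (N : (Fin n → ℂ) → ℝ)
    (hN_tri : ∀ x y : Fin n → ℂ, N (x + y) ≤ N x + N y)
    (hN_smul : ∀ (a : ℂ) (x : Fin n → ℂ), N (a • x) = ‖a‖ * N x)
    (hN_def : ∀ x : Fin n → ℂ, N x = 0 → x = 0)
    (hN_unc : ∀ x y : Fin n → ℂ, (∀ j, ‖x j‖ ≤ ‖y j‖) → N x ≤ N y)
    (L : MultilinearMap ℂ (fun _ : Fin m => (Fin n → ℂ)) ℂ)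
    (x : Fin m → (Fin n → ℂ)) (hx : ∀ k, N (x k) ≤ 1) (f g : Fin n → ℕ) :
    ‖∑ i : Fin m → Fin n, (if f (i u) = g (i v) then (1:ℂ) else 0)
        * L (fun k => Pi.single (i k) 1) * ∏ k, x k (i k)‖ ≤
      ⨆ z : {z : Fin m → (Fin n → ℂ) // ∀ k, N (z k) ≤ 1}, ‖L z.1‖ := by
  set B : ℕ := (Finset.univ.sup f) + (Finset.univ.sup g) + 1 with hB
  have hB0 : (B : ℂ) ≠ 0 := Nat.cast_ne_zero.mpr (by omega)
  set ω : ℂ := Complex.exp (2 * Real.pi * Complex.I / B) with hω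
  have hroot : IsPrimitiveRoot ω B := Complex.isPrimitiveRoot_exp B (by omega)
  have hωn : ‖ω‖ = 1 := by
    rw [hω]
    have : (2 * Real.pi * Complex.I / B) = ((2 * Real.pi / B : ℝ) : ℂ) * Complex.I := by
      push_cast; ring
    rw [this, Complex.norm_exp_ofReal_mul_I]
  have hω0 : ω ≠ 0 := Complex.exp_ne_zero _
  have habs : ∀ d : ℤ, ‖ω ^ d‖ = 1 := fun d => by rw [norm_zpow, hωn, one_zpow]
  -- the key orthogonality identity
  have hkey : ∀ p q : Fin n,
      (B : ℂ)⁻¹ * ∑ r ∈ Finset.range B, ω ^ ((r : ℤ) * ((f p : ℤ) - (g q : ℤ)))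
        = if f p = g q then 1 else 0 := by
    intro p q
    have hfp : f p ≤ Finset.univ.sup f := Finset.le_sup (Finset.mem_univ p)
    have hgq : g q ≤ Finset.univ.sup g := Finset.le_sup (Finset.mem_univ q)
    set d : ℤ := (f p : ℤ) - (g q : ℤ) with hd
    by_cases hfg : f p = g q
    · rw [if_pos hfg]
      have : d = 0 := by omega
      simp [this, Finset.sum_const, hB0]
    · rw [if_neg hfg]
      have hz1 : ω ^ d ≠ 1 := by
        intro h
        have := (hroot.zpow_eq_one_iff_dvd d).mp h
        rcases this with ⟨c, hc⟩
        have hdlt : d < B := by omega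
        have hdgt : -(B:ℤ) < d := by omega
        have hd0 : d ≠ 0 := by omega
        rcases lt_trichotomy c 0 with h' | h' | h'
        · nlinarith [hc]
        · rw [h', mul_zero] at hc; exact hd0 hc
        · nlinarith [hc]
      have hrw : ∀ r : ℕ, ω ^ ((r : ℤ) * d) = (ω ^ d) ^ r := by
        intro r
        rw [mul_comm, zpow_mul, zpow_natCast]
      rw [Finset.sum_congr rfl (fun r _ => hrw r), geom_sum_eq hz1]
      have hωB : (ω ^ d) ^ B = 1 := by
        rw [← zpow_natCast (ω ^ d) B, ← zpow_mul, mul_comm, zpow_mul, zpow_natCast,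
          hroot.pow_eq_one, one_zpow]
      rw [hωB]
      simp
  -- the twisted vectors
  set y : ℕ → Fin m → Fin n → ℂ := fun r k j =>
    (if k = u then ω ^ ((r : ℤ) * (f j : ℤ)) else if k = v then ω ^ (-((r : ℤ) * (g j : ℤ))) else 1)
      * x k j with hy
  have hyN : ∀ r k, N (y r k) ≤ 1 := by
    intro r k
    refine le_trans (hN_unc (y r k) (x k) (fun j => ?_)) (hx k)
    rw [hy]
    simp only
    rw [norm_mul]
    rcases eq_or_ne k u with rfl | hk
    · simp [habs]
    · rcases eq_or_ne k v with rfl | hk'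
      · simp [hk, habs]
      · simp [hk, hk']
  -- the averaging identity
  have hav : ∑ i : Fin m → Fin n, (if f (i u) = g (i v) then (1:ℂ) else 0)
        * L (fun k => Pi.single (i k) 1) * ∏ k, x k (i k)
      = (B : ℂ)⁻¹ * ∑ r ∈ Finset.range B, L (y r) := by
    have hLy : ∀ r : ℕ, L (y r) = ∑ i : Fin m → Fin n,
        ω ^ ((r : ℤ) * ((f (i u) : ℤ) - (g (i v) : ℤ)))
          * (L (fun k => Pi.single (i k) 1) * ∏ k, x k (i k)) := by
      intro r
      rw [expand L (y r)]
      refine Finset.sum_congr rfl (fun i _ => ?_)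
      have : (∏ k, y r k (i k)) = (∏ k : Fin m,
          (if k = u then ω ^ ((r : ℤ) * (f (i k) : ℤ))
            else if k = v then ω ^ (-((r : ℤ) * (g (i k) : ℤ))) else 1)) * ∏ k, x k (i k) := by
        rw [← Finset.prod_mul_distrib]
      rw [this, prod_two u v huv]
      have he : (r:ℤ) * ((f (i u) : ℤ) - (g (i v) : ℤ))
          = (r:ℤ) * (f (i u) : ℤ) + -((r:ℤ) * (g (i v) : ℤ)) := by ring
      rw [he, zpow_add₀ hω0]
      ring
    have hswap : ∑ r ∈ Finset.range B, L (y r) = ∑ i : Fin m → Fin n,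
        ∑ r ∈ Finset.range B, ω ^ ((r : ℤ) * ((f (i u) : ℤ) - (g (i v) : ℤ)))
          * (L (fun k => Pi.single (i k) 1) * ∏ k, x k (i k)) := by
      rw [Finset.sum_congr rfl (fun r _ => hLy r)]
      exact Finset.sum_comm
    rw [hswap, Finset.mul_sum]
    refine Finset.sum_congr rfl (fun i _ => ?_)
    rw [← Finset.sum_mul, ← mul_assoc, hkey (i u) (i v), mul_assoc]
  rw [hav]
  have hbound : ∀ r ∈ Finset.range B, ‖L (y r)‖ ≤
      ⨆ z : {z : Fin m → (Fin n → ℂ) // ∀ k, N (z k) ≤ 1}, ‖L z.1‖ :=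
    fun r _ => le_sup N hN_tri hN_smul hN_def hN_unc L (y r) (hyN r)
  calc ‖(B : ℂ)⁻¹ * ∑ r ∈ Finset.range B, L (y r)‖
      = (B : ℝ)⁻¹ * ‖∑ r ∈ Finset.range B, L (y r)‖ := by
        rw [norm_mul, norm_inv, Complex.norm_natCast]
    _ ≤ (B : ℝ)⁻¹ * ∑ r ∈ Finset.range B, ‖L (y r)‖ := by
        refine mul_le_mul_of_nonneg_left (norm_sum_le _ _) (by positivity)
    _ ≤ (B : ℝ)⁻¹ * ∑ r ∈ Finset.range B,
          (⨆ z : {z : Fin m → (Fin n → ℂ) // ∀ k, N (z k) ≤ 1}, ‖L z.1‖) := by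
        refine mul_le_mul_of_nonneg_left (Finset.sum_le_sum hbound) (by positivity)
    _ = ⨆ z : {z : Fin m → (Fin n → ℂ) // ∀ k, N (z k) ≤ 1}, ‖L z.1‖ := by
        rw [Finset.sum_const, Finset.card_range, nsmul_eq_mul, ← mul_assoc,
          inv_mul_cancel₀ (by exact_mod_cast hB0), one_mul]

lemma Dn_le_logb : ∀ n : ℕ, 1 ≤ n → (Dn n : ℝ) ≤ Real.logb 2 (2 * n) := by
  intro n
  induction n using Nat.strong_induction_on with
  | _ n IH =>
  intro hn
  obtain ⟨k, rfl⟩ := Nat.exists_eq_succ_of_ne_zero (by omega : n ≠ 0)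
  rw [Dn]
  rcases Nat.eq_zero_or_pos ((k+1)/2) with h0 | hpos
  · have : k = 0 := by omega
    subst this
    rw [h0]
    have : ((2:ℝ) * ((0+1 : ℕ):ℝ)) = 2 := by norm_num
    rw [this, Real.logb_self_eq_one (by norm_num : (1:ℝ) < 2)]
    norm_num [Dn]
  · have hlt : (k+1)/2 < k + 1 := Nat.div_lt_self (Nat.succ_pos k) (by norm_num)
    have IH' := IH _ hlt hpos
    have h2 : (2:ℝ) * ((k+1)/2 : ℕ) ≤ ((k+1 : ℕ) : ℝ) := by
      push_cast
      have : 2 * ((k+1)/2) ≤ k + 1 := Nat.mul_div_le _ 2 |>.trans (le_refl _)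
      exact_mod_cast Nat.cast_le.mpr (by omega : 2 * ((k+1)/2) ≤ k + 1)
    have hmono : Real.logb 2 (2 * ((k+1)/2 : ℕ)) ≤ Real.logb 2 ((k+1 : ℕ) : ℝ) := by
      refine Real.logb_le_logb_of_le (by norm_num) (by positivity) h2
    have hsplit : Real.logb 2 (2 * ((k+1:ℕ) : ℝ)) = 1 + Real.logb 2 ((k+1:ℕ) : ℝ) := by
      rw [Real.logb_mul (by norm_num) (by positivity)]
      rw [Real.logb_self_eq_one (by norm_num : (1:ℝ) < 2)]
    push_cast
    push_cast at IH' hmono hsplit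
    linarith

/-- The Schur product `A ⊙ L` of a coefficient array `A` with an `m`-form `L`:
the `m`-form with coefficients `c_i(A)·c_i(L)`. -/
noncomputable def schurMul (n m : ℕ) (A : (Fin m → Fin n) → ℂ)
    (L : MultilinearMap ℂ (fun _ : Fin m => (Fin n → ℂ)) ℂ) :
    (Fin m → (Fin n → ℂ)) → ℂ :=
  fun x => ∑ i : Fin m → Fin n,
    A i * L (fun k => Pi.single (i k) 1) * ∏ k : Fin m, x k (i k)

/-- `c_i(D^{u,v}) = 1` if `i_u = i_v`, else `0`. -/
noncomputable def Tmat (n m : ℕ) (u v : Fin m) : (Fin m → Fin n) → ℂ :=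
  fun i => if i u ≤ i v then 1 else 0

/-- Schur multiplication by `D^{u,v}` does not increase the norm of an `m`-form,
for any `1`-unconditional norm `N` on `ℂⁿ`. -/
theorem schur_norm_Tmat (n m : ℕ) (u v : Fin m)
    (N : (Fin n → ℂ) → ℝ)
    (hN_tri : ∀ x y : Fin n → ℂ, N (x + y) ≤ N x + N y)
    (hN_smul : ∀ (a : ℂ) (x : Fin n → ℂ), N (a • x) = ‖a‖ * N x)
    (hN_def : ∀ x : Fin n → ℂ, N x = 0 → x = 0)
    (hN_unc : ∀ x y : Fin n → ℂ, (∀ j, ‖x j‖ ≤ ‖y j‖) → N x ≤ N y)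
    (L : MultilinearMap ℂ (fun _ : Fin m => (Fin n → ℂ)) ℂ)
    (x : Fin m → (Fin n → ℂ)) (hx : ∀ k, N (x k) ≤ 1) :
    ‖schurMul n m (Tmat n m u v) L x‖ ≤
      Real.logb 2 (2 * n) * ⨆ y : {y : Fin m → (Fin n → ℂ) // ∀ k, N (y k) ≤ 1}, ‖L y.1‖ := by
  rcases Nat.eq_zero_or_pos n with hn | hn
  · subst hn
    haveI : IsEmpty (Fin m → Fin 0) := ⟨fun i => (i u).elim0⟩
    rw [schurMul, Finset.univ_eq_empty, Finset.sum_empty, norm_zero,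
      Nat.cast_zero, mul_zero, Real.logb_zero, zero_mul]
  · set S := ⨆ y : {y : Fin m → (Fin n → ℂ) // ∀ k, N (y k) ≤ 1}, ‖L y.1‖ with hS
    have hS_ub : ∀ y, (∀ k, N (y k) ≤ 1) → ‖L y‖ ≤ S :=
      fun y hy => le_sup N hN_tri hN_smul hN_def hN_unc L y hy
    have hS0 : 0 ≤ S := by
      refine le_trans (norm_nonneg (L 0)) (hS_ub 0 (fun k => ?_))
      show N 0 ≤ 1
      rw [N_zero N hN_smul]
      norm_num
    have hlogb1 : 1 ≤ Real.logb 2 (2 * n) := by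
      rw [← Real.logb_self_eq_one (by norm_num : (1:ℝ) < 2)]
      refine Real.logb_le_logb_of_le (by norm_num) (by norm_num) ?_
      have : (1:ℝ) ≤ (n:ℝ) := by exact_mod_cast hn
      linarith
    by_cases huv : u = v
    · subst huv
      have heq : schurMul n m (Tmat n m u u) L x = L x := by
        rw [expand L x, schurMul]
        refine Finset.sum_congr rfl fun i _ => ?_
        rw [Tmat]
        simp only [if_pos (le_refl (i u))]
        ring
      rw [heq]
      calc ‖L x‖ ≤ S := hS_ub x hx
        _ = 1 * S := (one_mul S).symm
        _ ≤ Real.logb 2 (2*n) * S := mul_le_mul_of_nonneg_right hlogb1 hS0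
    · obtain ⟨φ, ψ, hφψ⟩ := layer_exists n
      have hTmat : ∀ i : Fin m → Fin n, Tmat n m u v i =
          ∑ t ∈ Finset.range (Dn n), (if φ (i u) t = ψ (i v) t then (1:ℂ) else 0) := by
        intro i
        have h := hφψ (i u) (i v) (i u).isLt (i v).isLt (Dn n) le_rfl
        rw [Tmat]
        have hle : (i u ≤ i v) ↔ ((i u : ℕ) ≤ (i v : ℕ)) := Iff.rfl
        calc (if i u ≤ i v then (1:ℂ) else 0)
            = ((if (i u : ℕ) ≤ (i v : ℕ) then 1 else 0 : ℕ) : ℂ) := by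
              rw [apply_ite (Nat.cast : ℕ → ℂ), Nat.cast_one, Nat.cast_zero]
              exact if_congr Iff.rfl rfl rfl
          _ = ((∑ t ∈ Finset.range (Dn n),
                if φ (i u) t = ψ (i v) t then 1 else 0 : ℕ) : ℂ) := by rw [h]
          _ = ∑ t ∈ Finset.range (Dn n),
                (if φ (i u) t = ψ (i v) t then (1:ℂ) else 0) := by
              push_cast [apply_ite (Nat.cast : ℕ → ℂ)]
              rfl
      have hdecomp : schurMul n m (Tmat n m u v) L x =
          ∑ t ∈ Finset.range (Dn n), ∑ i : Fin m → Fin n,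
            (if φ (i u) t = ψ (i v) t then (1:ℂ) else 0)
              * L (fun k => Pi.single (i k) 1) * ∏ k, x k (i k) := by
        rw [schurMul]
        rw [Finset.sum_congr rfl (fun i _ => by
          rw [hTmat i, Finset.sum_mul, Finset.sum_mul])]
        exact Finset.sum_comm
      rw [hdecomp]
      calc ‖∑ t ∈ Finset.range (Dn n), ∑ i : Fin m → Fin n,
            (if φ (i u) t = ψ (i v) t then (1:ℂ) else 0)
              * L (fun k => Pi.single (i k) 1) * ∏ k, x k (i k)‖
          ≤ ∑ t ∈ Finset.range (Dn n), ‖∑ i : Fin m → Fin n,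
            (if φ (i u) t = ψ (i v) t then (1:ℂ) else 0)
              * L (fun k => Pi.single (i k) 1) * ∏ k, x k (i k)‖ := norm_sum_le _ _
        _ ≤ ∑ t ∈ Finset.range (Dn n), S := by
            refine Finset.sum_le_sum (fun t _ => ?_)
            exact layer_bound u v huv N hN_tri hN_smul hN_def hN_unc L x hx
              (fun p => φ (p : ℕ) t) (fun q => ψ (q : ℕ) t)
        _ = (Dn n : ℝ) * S := by
            rw [Finset.sum_const, Finset.card_range, nsmul_eq_mul]
        _ ≤ Real.logb 2 (2 * n) * S :=
            mul_le_mul_of_nonneg_right (Dn_le_logb n hn) hS0
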